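/- Suppose V : ℝⁿ → ℝ≥0 satisfies along each solution φ of a restricted hybrid system: V(φ(t,j)) ≤ e^{λc t + λd j} V(φ(0,0)), and moreover for all (t,j) ∈ dom φ, λc t + λd j ≤ M − γ(t+j) with constants γ > 0, M > 0. Assume V(φ(0,0)) ≤ V_u and V(φ(t,j)) ≥ V_l > 0 for all (t,j) ∈ dom φ. Then sup{t+j : (t,j) ∈ dom φ} ≤ (M + log V_u − log V_l)/γ. -/
import Mathlib

/-- Quantitative step for uniform global recurrence: the exponential bound
together with the linear hybrid-time inequality and uniform bounds `V_l ≤ V ≤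
e^{...} V_u` force a uniform bound on the hybrid time `t + j`. -/
theorem stmt9 (Dφ : Set (ℝ × ℕ)) (w : ℝ × ℕ → ℝ) (w0 : ℝ)
    (lc ld M γ Vu Vl : ℝ)
    (hγ : 0 < γ) (hM : 0 < M) (hVl : 0 < Vl) (hVu : 0 < Vu)
    (hbound : ∀ p ∈ Dφ, w p ≤ Real.exp (lc * p.1 + ld * p.2) * w0)
    (hlin : ∀ p ∈ Dφ, lc * p.1 + ld * p.2 ≤ M - γ * (p.1 + p.2))
    (hu : w0 ≤ Vu)
    (hl : ∀ p ∈ Dφ, Vl ≤ w p) :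
    ∀ p ∈ Dφ, p.1 + (p.2 : ℝ) ≤ (M + Real.log Vu - Real.log Vl) / γ := by
  intro p hp
  have h1 : Vl ≤ Real.exp (M - γ * (p.1 + p.2)) * Vu := by
    calc Vl ≤ w p := hl p hp
      _ ≤ Real.exp (lc * p.1 + ld * p.2) * w0 := hbound p hp
      _ ≤ Real.exp (M - γ * (p.1 + p.2)) * Vu := by
          have h0 : (0:ℝ) ≤ w0 := le_trans (le_of_lt hVl)
            (le_trans (hl p hp) (hbound p hp) |>.trans (le_of_eq rfl)) |>.trans (le_refl _) |> fun _ => by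
              nlinarith [Real.exp_pos (lc * p.1 + ld * p.2), hl p hp, hbound p hp]
          exact mul_le_mul (Real.exp_le_exp.mpr (hlin p hp)) hu h0 (Real.exp_pos _).le
  have h2 : Real.log Vl ≤ M - γ * (p.1 + p.2) + Real.log Vu := by
    have := Real.log_le_log hVl h1
    rwa [Real.log_mul (Real.exp_ne_zero _) (ne_of_gt hVu), Real.log_exp] at this
  rw [le_div_iff₀ hγ]
  nlinarith
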